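/- Let G be a finite simple graph with vertex set I and let k = (k_i : i ∈ I) be positive integers. Let G(k) be the join graph obtained by replacing each vertex j by a clique on k_j vertices and joining every vertex of the j-th clique to every vertex of the r-th clique whenever (j,r) ∈ E(G). Fix i ∈ I. Then |B̃^i(k, G)| = (1/k!) · Σ_{r=1}^{k_i} |B̃^{i^r}(1, G(k))|, where k! = Π_j k_j!, B̃^i(k, G) is the set of words in the free partially commutative monoid M(I,G) with letter multiplicities k and initial alphabet {i}, and B̃^{i^r}(1, G(k)) is the set of words in M(V(G(k)), G(k)) using each vertex exactly once with initial alphabet the r-th vertex of the i-th clique. -/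

import Mathlib

/-- The commutation relation on the free monoid: two letters may be exchanged
whenever they are not adjacent in `G`. -/
def traceRel {V : Type*} (G : SimpleGraph V) : FreeMonoid V → FreeMonoid V → Prop :=
  fun x y => ∃ a b : V, ¬ G.Adj a b ∧
    x = FreeMonoid.of a * FreeMonoid.of b ∧ y = FreeMonoid.of b * FreeMonoid.of a

/-- The congruence on the free monoid generated by the commutation relations. -/
def traceCon {V : Type*} (G : SimpleGraph V) : Con (FreeMonoid V) := conGen (traceRel G)

/-- The free partially commutative monoid (trace monoid) `M(I, G)` associated to `G`. -/
abbrev TraceMonoid {V : Type*} (G : SimpleGraph V) := (traceCon G).Quotient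

/-- The element of the trace monoid represented by a list of letters. -/
def traceMk {V : Type*} (G : SimpleGraph V) (L : List V) : TraceMonoid G :=
  (traceCon G).mk' (FreeMonoid.ofList L)

/-- The multiplicity of the letter `i` in the initial alphabet multiset `IA_m(w)`:
the largest `m` such that `w = u · iᵐ`. -/
noncomputable def IAcount {V : Type*} (G : SimpleGraph V) (w : TraceMonoid G) (i : V) : ℕ :=
  sSup {m : ℕ | ∃ u : TraceMonoid G, w = u * (traceMk G [i]) ^ m}

/-- The initial alphabet `IA(w)` of a trace: the set of letters `i` with `w = u · i`. -/
def IAset {V : Type*} (G : SimpleGraph V) (w : TraceMonoid G) : Set V :=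
  {i | ∃ u : TraceMonoid G, w = u * traceMk G [i]}

/-- `B̃ⁱ(k,G)`: traces whose letter multiplicities are given by `k` and whose initial
alphabet (as a set) is `{i}`. -/
def BtildeSet {V : Type*} [DecidableEq V] (G : SimpleGraph V) (k : V → ℕ) (i : V) :
    Set (TraceMonoid G) :=
  {w | ∃ L : List V, traceMk G L = w ∧ (∀ v, L.count v = k v) ∧ IAset G w = {i}}

/-- The join `G(k)` of `G` with respect to `k`: each vertex `j` is replaced by a clique on
`k j` vertices, and all vertices of the `j`-th and `r`-th cliques are joined when
`(j,r) ∈ E(G)`. -/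
def joinGraph {V : Type*} (G : SimpleGraph V) (k : V → ℕ) :
    SimpleGraph (Σ j : V, Fin (k j)) where
  Adj p q := (p.1 = q.1 ∧ p ≠ q) ∨ G.Adj p.1 q.1
  symm := by
    constructor
    rintro p q (⟨h1, h2⟩ | h)
    · exact Or.inl ⟨h1.symm, h2.symm⟩
    · exact Or.inr h.symm
  loopless := by
    constructor
    rintro p (⟨_, h⟩ | h)
    · exact h rfl
    · exact G.irrefl h

namespace Stmt9

open Relation List

variable {V : Type*} {W : Type*} (G : SimpleGraph V)

def step (G : SimpleGraph V) : FreeMonoid V → FreeMonoid V → Prop :=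
  fun x y => ∃ (u v : FreeMonoid V) (a b : V), ¬ G.Adj a b ∧
    x = u * (FreeMonoid.of a * FreeMonoid.of b) * v ∧
    y = u * (FreeMonoid.of b * FreeMonoid.of a) * v

theorem step_symm {x y : FreeMonoid V} (h : step G x y) : step G y x := by
  obtain ⟨u, v, a, b, hab, hx, hy⟩ := h
  exact ⟨u, v, b, a, fun h' => hab h'.symm, hy, hx⟩

theorem step_traceCon {x y : FreeMonoid V} (h : step G x y) : traceCon G x y := by
  obtain ⟨u, v, a, b, hab, hx, hy⟩ := h
  subst hx; subst hy
  exact (traceCon G).mul ((traceCon G).mul ((traceCon G).refl u)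
    (ConGen.Rel.of _ _ ⟨a, b, hab, rfl, rfl⟩)) ((traceCon G).refl v)

/-- the reflexive-transitive closure of `step` is a congruence -/
def stepCon (G : SimpleGraph V) : Con (FreeMonoid V) where
  r := ReflTransGen (step G)
  iseqv := by
    refine ⟨fun _ => .refl, ?_, fun h h' => .trans h h'⟩
    · intro x y h
      induction h with
      | refl => exact .refl
      | tail _ hs ih => exact .trans (.single (step_symm G hs)) ih
  mul' := by
    intro a b c d hab hcd
    have h1 : ReflTransGen (step G) (a * c) (b * c) := by
      refine ReflTransGen.lift (fun x => x * c) ?_ _ _ hab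
      rintro x y ⟨u, v, p, q, hpq, hx, hy⟩
      exact ⟨u, v * c, p, q, hpq, by rw [hx]; simp [mul_assoc], by rw [hy]; simp [mul_assoc]⟩
    have h2 : ReflTransGen (step G) (b * c) (b * d) := by
      refine ReflTransGen.lift (fun x => b * x) ?_ _ _ hcd
      rintro x y ⟨u, v, p, q, hpq, hx, hy⟩
      exact ⟨b * u, v, p, q, hpq, by rw [hx]; simp [mul_assoc], by rw [hy]; simp [mul_assoc]⟩
    exact h1.trans h2

theorem traceCon_iff_steps {x y : FreeMonoid V} :
    traceCon G x y ↔ ReflTransGen (step G) x y := by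
  constructor
  · intro h
    refine (Con.conGen_le (c := stepCon G)).2 ?_ h
    rintro x y ⟨a, b, hab, hx, hy⟩
    exact ReflTransGen.single ⟨1, 1, a, b, hab, by simp [hx], by simp [hy]⟩
  · intro h
    induction h with
    | refl => exact (traceCon G).refl x
    | tail _ hs ih => exact (traceCon G).trans ih (step_traceCon G hs)

/-- trace-equivalent words are permutations of each other -/
theorem perm_of_traceCon {x y : FreeMonoid V} (h : traceCon G x y) :
    List.Perm (FreeMonoid.toList x) (FreeMonoid.toList y) := by
  rw [traceCon_iff_steps] at h
  induction h with
  | refl => exact .refl _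
  | tail _ hs ih =>
    obtain ⟨u, v, a, b, _, hx, hy⟩ := hs
    subst hx; subst hy
    refine ih.trans ?_
    change List.Perm (u.toList ++ ([a] ++ [b]) ++ v.toList) (u.toList ++ ([b] ++ [a]) ++ v.toList)
    exact ((List.Perm.swap' b a (List.Perm.refl [])).append_left u.toList).append_right v.toList

/-- mapping along an adjacency-reflecting function preserves trace equivalence -/
theorem traceCon_map {G₂ : SimpleGraph W} (g : V → W)
    (hg : ∀ a b, ¬ G.Adj a b → ¬ G₂.Adj (g a) (g b)) {x y : FreeMonoid V}
    (h : traceCon G x y) : traceCon G₂ (FreeMonoid.map g x) (FreeMonoid.map g y) := by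
  refine (Con.conGen_le (c := Con.comap (FreeMonoid.map g) (map_mul _) (traceCon G₂))).2 ?_ h
  rintro x y ⟨a, b, hab, hx, hy⟩
  show traceCon G₂ _ _
  subst hx; subst hy
  simp only [map_mul, FreeMonoid.map_of]
  exact ConGen.Rel.of _ _ ⟨g a, g b, hg a b hab, rfl, rfl⟩

/-- filtering to a clique is a trace invariant -/
theorem filter_eq_of_traceCon (p : V → Prop) [DecidablePred p]
    (hp : ∀ a b, p a → p b → a ≠ b → G.Adj a b) {x y : FreeMonoid V}
    (h : traceCon G x y) :
    (FreeMonoid.toList x).filter (fun a => decide (p a)) =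
      (FreeMonoid.toList y).filter (fun a => decide (p a)) := by
  rw [traceCon_iff_steps] at h
  induction h with
  | refl => rfl
  | tail _ hs ih =>
    obtain ⟨u, v, a, b, hab, hx, hy⟩ := hs
    subst hx; subst hy
    refine ih.trans ?_
    have hyz : [a, b].filter (fun a => decide (p a)) = [b, a].filter (fun a => decide (p a)) := by
      rcases eq_or_ne a b with rfl | hne
      · rfl
      · by_cases hpa : p a <;> by_cases hpb : p b <;>
          first
            | exact absurd (hp a b hpa hpb hne) hab
            | simp [hpa, hpb]
    change (u.toList ++ [a, b] ++ v.toList).filter _ = (u.toList ++ [b, a] ++ v.toList).filter _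
    simp only [List.filter_append, hyz]


theorem traceMk_eq_iff {L₁ L₂ : List V} :
    traceMk G L₁ = traceMk G L₂ ↔ traceCon G (FreeMonoid.ofList L₁) (FreeMonoid.ofList L₂) :=
  Con.eq _

theorem traceMk_surjective (t : TraceMonoid G) : ∃ L : List V, traceMk G L = t := by
  obtain ⟨x, hx⟩ := Con.mk'_surjective (c := traceCon G) t
  exact ⟨FreeMonoid.toList x, by simpa [traceMk] using hx⟩

theorem traceMk_append (L₁ L₂ : List V) :
    traceMk G (L₁ ++ L₂) = traceMk G L₁ * traceMk G L₂ := by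
  simp [traceMk, map_mul]

theorem mem_IAset_iff {t : TraceMonoid G} {p : V} :
    p ∈ IAset G t ↔ ∃ M : List V, traceMk G (M ++ [p]) = t := by
  constructor
  · rintro ⟨u, hu⟩
    obtain ⟨M, hM⟩ := traceMk_surjective G u
    exact ⟨M, by rw [traceMk_append, hM, hu]⟩
  · rintro ⟨M, hM⟩
    exact ⟨traceMk G M, by rw [← hM, traceMk_append]⟩

/-- last letter is in the initial alphabet -/
theorem getLast_mem_IAset (M : List V) (p : V) : p ∈ IAset G (traceMk G (M ++ [p])) :=
  (mem_IAset_iff G).2 ⟨M, rfl⟩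

/-- counts are trace invariants -/
theorem count_eq_of_traceMk_eq [DecidableEq V] {L₁ L₂ : List V}
    (h : traceMk G L₁ = traceMk G L₂) (v : V) : L₁.count v = L₂.count v := by
  have := perm_of_traceCon G ((traceMk_eq_iff G).1 h)
  simpa using this.count_eq v

section Std
variable [DecidableEq V] (k : V → ℕ) (hk : ∀ v, 0 < k v)

/-- standardization: label each occurrence by its occurrence number -/
def std (l : List V) : List (Σ j : V, Fin (k j)) :=
  l.mapIdx fun n a =>
    ⟨a, if h : (l.take n).count a < k a then ⟨(l.take n).count a, h⟩ else ⟨0, hk _⟩⟩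

theorem std_length (l : List V) : (std k hk l).length = l.length := by simp [std]

theorem std_getElem (l : List V) (n : ℕ) (h : n < (std k hk l).length) :
    (std k hk l)[n] = ⟨l[n]'(by simpa [std] using h),
      if h' : (l.take n).count (l[n]'(by simpa [std] using h)) < k (l[n]'(by simpa [std] using h))
      then ⟨(l.take n).count (l[n]'(by simpa [std] using h)), h'⟩ else ⟨0, hk _⟩⟩ := by
  simp only [std, List.getElem_mapIdx]

theorem std_map_fst (l : List V) : (std k hk l).map Sigma.fst = l := by
  refine List.ext_getElem (by simp [std_length]) ?_
  intro n h1 h2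
  simp [std_getElem]

theorem count_take_lt {l : List V} (hc : ∀ v, l.count v = k v) {n : ℕ} (h : n < l.length) :
    (l.take n).count l[n] < k l[n] := by
  have h1 : l.take (n + 1) = l.take n ++ [l[n]] := by simp [List.take_succ]
  have h2 : (l.take (n+1)).count l[n] ≤ k l[n] := by
    rw [← hc l[n]]; exact (List.take_sublist _ _).count_le _
  rw [h1, List.count_append] at h2; simp at h2; omega

theorem count_take_mono (l : List V) (a : V) {n m : ℕ} (h : n ≤ m) :
    (l.take n).count a ≤ (l.take m).count a :=
  ((List.take_prefix_take_left (l := l) h).sublist).count_le a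

theorem std_nodup {l : List V} (hc : ∀ v, l.count v = k v) : (std k hk l).Nodup := by
  rw [List.nodup_iff_injective_get]
  have key : ∀ m m' : Fin (std k hk l).length,
      (std k hk l).get m = (std k hk l).get m' → (m : ℕ) < (m' : ℕ) → False := by
    intro m m' he hlt
    have hm : (m : ℕ) < l.length := by have := m.2; simpa [std_length] using this
    have hm' : (m' : ℕ) < l.length := by have := m'.2; simpa [std_length] using this
    rw [List.get_eq_getElem, List.get_eq_getElem, std_getElem, std_getElem] at he
    have hfst : l[(m:ℕ)] = l[(m':ℕ)] := congrArg Sigma.fst he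
    have hlt1 : (l.take (m:ℕ)).count l[(m:ℕ)] < k l[(m:ℕ)] := count_take_lt k hc hm
    have hlt2 : (l.take (m':ℕ)).count l[(m':ℕ)] < k l[(m':ℕ)] := count_take_lt k hc hm'
    have hsnd := congrArg (fun p : (Σ j : V, Fin (k j)) => (p.2 : ℕ)) he
    simp only [dif_pos hlt1, dif_pos hlt2] at hsnd
    rw [← hfst] at hsnd
    have h1 : l.take ((m:ℕ) + 1) = l.take (m:ℕ) ++ [l[(m:ℕ)]] := by
      rw [List.take_succ, List.getElem?_eq_getElem hm]; rfl
    have hstep : (l.take (m:ℕ)).count l[(m:ℕ)] < (l.take ((m:ℕ)+1)).count l[(m:ℕ)] := by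
      rw [h1, List.count_append]; simp
    have := count_take_mono l l[(m:ℕ)] (show (m:ℕ)+1 ≤ (m':ℕ) by omega)
    omega
  intro m m' he
  rcases lt_trichotomy (m : ℕ) (m' : ℕ) with h | h | h
  · exact (key m m' he h).elim
  · exact Fin.ext h
  · exact (key m' m he.symm h).elim

theorem length_eq_sum_count [Fintype V] (l : List V) :
    l.length = ∑ v : V, l.count v := by
  induction l with
  | nil => simp
  | cons a l ih =>
    simp only [List.length_cons, List.count_cons, ih]
    rw [Finset.sum_add_distrib]
    simp [Finset.sum_ite_eq']

theorem std_count [Fintype V] {l : List V} (hc : ∀ v, l.count v = k v)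
    (w : Σ j : V, Fin (k j)) : (std k hk l).count w = 1 := by
  have hnd := std_nodup k hk hc
  refine List.count_eq_one_of_mem hnd ?_
  have hcard : (std k hk l).toFinset.card = Fintype.card (Σ j : V, Fin (k j)) := by
    rw [List.toFinset_card_of_nodup hnd, std_length, length_eq_sum_count,
      Fintype.card_sigma]
    simp [hc]
  have := Finset.eq_univ_of_card _ hcard
  rw [← List.mem_toFinset, this]
  exact Finset.mem_univ w

end Std

section Lift
variable [DecidableEq V] {G : SimpleGraph V} {k : V → ℕ}

theorem joinGraph_not_adj {p q : Σ j : V, Fin (k j)} (h1 : p.1 ≠ q.1)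
    (h2 : ¬ G.Adj p.1 q.1) : ¬ (joinGraph G k).Adj p q := by
  rintro (⟨h, _⟩ | h)
  · exact h1 h
  · exact h2 h

theorem not_adj_of_joinGraph_not_adj {p q : Σ j : V, Fin (k j)}
    (h : ¬ (joinGraph G k).Adj p q) : ¬ G.Adj p.1 q.1 :=
  fun h' => h (Or.inr h')

theorem toList_eq_of_step {x y : FreeMonoid V} (h : step G x y) :
    ∃ (u v : List V) (a b : V), ¬ G.Adj a b ∧
      FreeMonoid.toList x = u ++ a :: b :: v ∧ FreeMonoid.toList y = u ++ b :: a :: v := by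
  obtain ⟨u, v, a, b, hab, hx, hy⟩ := h
  refine ⟨FreeMonoid.toList u, FreeMonoid.toList v, a, b, hab, ?_, ?_⟩
  · rw [hx]; simp [FreeMonoid.toList_mul, FreeMonoid.toList_of]
  · rw [hy]; simp [FreeMonoid.toList_mul, FreeMonoid.toList_of]

theorem step_of_lists {u v : List V} {a b : V} (hab : ¬ G.Adj a b) :
    step G (FreeMonoid.ofList (u ++ a :: b :: v)) (FreeMonoid.ofList (u ++ b :: a :: v)) := by
  refine ⟨FreeMonoid.ofList u, FreeMonoid.ofList v, a, b, hab, ?_, ?_⟩ <;>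
    apply FreeMonoid.toList.injective <;>
    simp [FreeMonoid.toList_mul, FreeMonoid.toList_of]

/-- lift a single step along the projection -/
theorem step_lift {L : List (Σ j : V, Fin (k j))} {y : FreeMonoid V}
    (hs : step G (FreeMonoid.ofList (L.map Sigma.fst)) y) :
    ∃ L' : List (Σ j : V, Fin (k j)),
      Relation.ReflTransGen (step (joinGraph G k)) (FreeMonoid.ofList L) (FreeMonoid.ofList L') ∧
      FreeMonoid.ofList (L'.map Sigma.fst) = y := by
  obtain ⟨u, v, a, b, hab, hx, hy⟩ := toList_eq_of_step hs
  simp only [FreeMonoid.toList_ofList] at hx hy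
  obtain ⟨l₁, l₂, hL, hl₁, hl₂⟩ := List.map_eq_append_iff.1 hx
  obtain ⟨p, l₃, hl₂', hpa, hl₃⟩ := List.map_eq_cons_iff.1 hl₂
  obtain ⟨q, l₄, hl₃', hqb, hl₄⟩ := List.map_eq_cons_iff.1 hl₃
  subst hl₂'; subst hl₃'
  rcases eq_or_ne a b with rfl | hne
  · refine ⟨L, Relation.ReflTransGen.refl, FreeMonoid.toList.injective ?_⟩
    simp only [FreeMonoid.toList_ofList]
    rw [hx, hy]
  · refine ⟨l₁ ++ q :: p :: l₄, Relation.ReflTransGen.single ?_, FreeMonoid.toList.injective ?_⟩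
    · rw [hL]
      exact step_of_lists (joinGraph_not_adj (by rw [hpa, hqb]; exact hne) (by rw [hpa, hqb]; exact hab))
    · simp only [FreeMonoid.toList_ofList]
      rw [hy]; simp [hl₁, hpa, hqb, hl₄]

/-- lift a chain of steps along the projection -/
theorem chain_lift {x y : FreeMonoid V} (h : Relation.ReflTransGen (step G) x y) :
    ∀ L : List (Σ j : V, Fin (k j)), FreeMonoid.ofList (L.map Sigma.fst) = x →
    ∃ L' : List (Σ j : V, Fin (k j)),
      Relation.ReflTransGen (step (joinGraph G k)) (FreeMonoid.ofList L) (FreeMonoid.ofList L') ∧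
      FreeMonoid.ofList (L'.map Sigma.fst) = y := by
  induction h with
  | refl => exact fun L hL => ⟨L, Relation.ReflTransGen.refl, hL⟩
  | tail _ hs ih =>
    intro L hL
    obtain ⟨L', hc, hL'⟩ := ih L hL
    obtain ⟨L'', hc', hL''⟩ := step_lift (by rw [hL']; exact hs)
    exact ⟨L'', hc.trans hc', hL''⟩

end Lift

section Main
variable [DecidableEq V] {G : SimpleGraph V} {k : V → ℕ}

theorem sigma_adj_reflect {σ : (Σ j : V, Fin (k j)) ≃ (Σ j : V, Fin (k j))}
    (hσ : ∀ p, (σ p).1 = p.1) (p q : Σ j : V, Fin (k j))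
    (h : ¬ (joinGraph G k).Adj p q) : ¬ (joinGraph G k).Adj (σ p) (σ q) := by
  rintro (⟨h1, h2⟩ | h1)
  · exact h (Or.inl ⟨by rw [← hσ p, ← hσ q]; exact h1, fun he => h2 (by rw [he])⟩)
  · exact h (Or.inr (by rw [← hσ p, ← hσ q]; exact h1))

/-- MAIN LIFTING LEMMA: two words on the join graph using each letter exactly once whose
projections are trace equivalent differ by a fiber-preserving permutation. -/
theorem main_lift {L₁ L₂ : List (Σ j : V, Fin (k j))}
    (h1 : ∀ w, L₁.count w = 1) (h2 : ∀ w, L₂.count w = 1)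
    (h : traceCon G (FreeMonoid.ofList (L₁.map Sigma.fst)) (FreeMonoid.ofList (L₂.map Sigma.fst))) :
    ∃ σ : (Σ j : V, Fin (k j)) ≃ (Σ j : V, Fin (k j)), (∀ p, (σ p).1 = p.1) ∧
      traceMk (joinGraph G k) (L₁.map σ) = traceMk (joinGraph G k) L₂ := by
  rw [traceCon_iff_steps] at h
  obtain ⟨L', hc, hL'⟩ := chain_lift h L₁ rfl
  have hL'eq : L'.map Sigma.fst = L₂.map Sigma.fst := by
    have := congrArg FreeMonoid.toList hL'
    simpa using this
  -- L' has each letter exactly once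
  have hcon : traceCon (joinGraph G k) (FreeMonoid.ofList L₁) (FreeMonoid.ofList L') := by
    rw [traceCon_iff_steps]; exact hc
  have h1' : ∀ w, L'.count w = 1 := by
    intro w
    have hperm := perm_of_traceCon _ hcon
    simp only [FreeMonoid.toList_ofList] at hperm
    rw [← hperm.count_eq, h1]
  have hnd' : L'.Nodup := List.nodup_iff_count_le_one.2 fun w => le_of_eq (h1' w)
  have hnd2 : L₂.Nodup := List.nodup_iff_count_le_one.2 fun w => le_of_eq (h2 w)
  have hmem' : ∀ w, w ∈ L' := fun w => List.count_pos_iff.1 (by rw [h1' w]; norm_num)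
  have hmem2 : ∀ w, w ∈ L₂ := fun w => List.count_pos_iff.1 (by rw [h2 w]; norm_num)
  have hlen : L'.length = L₂.length := by
    have := congrArg List.length hL'eq; simpa using this
  let e₁ := hnd'.getEquivOfForallMemList L' hmem'
  let e₂ := hnd2.getEquivOfForallMemList L₂ hmem2
  let σ : (Σ j : V, Fin (k j)) ≃ (Σ j : V, Fin (k j)) :=
    e₁.symm.trans ((finCongr hlen).trans e₂)
  have hget : ∀ m : Fin L'.length, σ (L'.get m) = L₂.get (finCongr hlen m) := by
    intro m
    have : e₁.symm (L'.get m) = m := e₁.symm_apply_apply m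
    simp only [σ, Equiv.trans_apply, this]
    rfl
  have hmapget : ∀ m : Fin L'.length, (L'.get m).1 = (L₂.get (finCongr hlen m)).1 := by
    intro m
    have h1 : (L'.map Sigma.fst)[(m : ℕ)]'(by simp only [List.length_map]; exact m.2) =
        (L₂.map Sigma.fst)[(m : ℕ)]'(by simp only [List.length_map]; rw [← hlen]; exact m.2) := by
      simp only [hL'eq]
    simpa using h1
  have hσfst : ∀ p, (σ p).1 = p.1 := by
    intro p
    obtain ⟨m, hm⟩ := List.mem_iff_get.1 (hmem' p)
    rw [← hm, hget m, ← hmapget m]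
  have hmapσ : L'.map σ = L₂ := by
    refine List.ext_get (by simp [hlen]) ?_
    intro n hn1 hn2
    have hn : n < L'.length := by simpa using hn1
    simp only [List.get_eq_getElem, List.getElem_map]
    exact hget ⟨n, hn⟩
  refine ⟨σ, hσfst, ?_⟩
  rw [traceMk_eq_iff, ← hmapσ]
  have : traceCon (joinGraph G k) (FreeMonoid.map σ (FreeMonoid.ofList L₁))
      (FreeMonoid.map σ (FreeMonoid.ofList L')) :=
    traceCon_map _ σ (sigma_adj_reflect hσfst) hcon
  exact this

/-- FREENESS: a fiber-preserving permutation fixing a full trace is the identity. -/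
theorem free_action {L : List (Σ j : V, Fin (k j))} (h1 : ∀ w, L.count w = 1)
    {σ : (Σ j : V, Fin (k j)) ≃ (Σ j : V, Fin (k j))} (hσ : ∀ p, (σ p).1 = p.1)
    (h : traceMk (joinGraph G k) (L.map σ) = traceMk (joinGraph G k) L) :
    ∀ p, σ p = p := by
  intro p
  have hfil := filter_eq_of_traceCon (joinGraph G k) (fun w => w.1 = p.1)
    (fun a b ha hb hne => Or.inl ⟨ha.trans hb.symm, hne⟩) ((traceMk_eq_iff _).1 h)
  simp only [FreeMonoid.toList_ofList] at hfil
  have hcomm : (L.map σ).filter (fun w => decide (w.1 = p.1)) =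
      (L.filter (fun w => decide (w.1 = p.1))).map σ := by
    rw [List.filter_map]
    exact congrArg (List.map σ) (List.filter_congr fun a _ => by simp [hσ a])
  rw [hcomm] at hfil
  set F := L.filter (fun w => decide (w.1 = p.1)) with hF
  have hpF : p ∈ F := by
    rw [hF, List.mem_filter]
    exact ⟨List.count_pos_iff.1 (by rw [h1 p]; norm_num), by simp⟩
  obtain ⟨m, hm⟩ := List.mem_iff_get.1 hpF
  have hopt : (F.map σ)[(m : ℕ)]? = F[(m : ℕ)]? := by rw [hfil]
  rw [List.getElem?_map, List.getElem?_eq_getElem m.2] at hopt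
  simp only [Option.map_some] at hopt
  have := Option.some.inj hopt
  rw [← hm, List.get_eq_getElem]
  exact this

end Main

section IA
variable [DecidableEq V] {G : SimpleGraph V} {k : V → ℕ}

/-- projecting an initial letter -/
theorem IA_proj {S : List (Σ j : V, Fin (k j))} {p : Σ j : V, Fin (k j)}
    (hp : p ∈ IAset (joinGraph G k) (traceMk (joinGraph G k) S)) :
    p.1 ∈ IAset G (traceMk G (S.map Sigma.fst)) := by
  obtain ⟨M, hM⟩ := (mem_IAset_iff _).1 hp
  refine (mem_IAset_iff _).2 ⟨M.map Sigma.fst, ?_⟩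
  rw [traceMk_eq_iff] at hM ⊢
  have := traceCon_map (joinGraph G k) Sigma.fst
    (fun a b hab h => hab (Or.inr h)) hM
  have he1 : FreeMonoid.map Sigma.fst (FreeMonoid.ofList (M ++ [p])) =
      FreeMonoid.ofList (M.map Sigma.fst ++ [p.1]) := by
    apply FreeMonoid.toList.injective; simp [FreeMonoid.toList_map]
  have he2 : FreeMonoid.map Sigma.fst (FreeMonoid.ofList S) =
      FreeMonoid.ofList (S.map Sigma.fst) := by
    apply FreeMonoid.toList.injective; simp [FreeMonoid.toList_map]
  rw [he1, he2] at this
  exact this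

/-- two initial letters in the same clique coincide (for multiplicity-one traces) -/
theorem IA_unique {S : List (Σ j : V, Fin (k j))} (hS : ∀ w, S.count w = 1)
    {p q : Σ j : V, Fin (k j)}
    (hp : p ∈ IAset (joinGraph G k) (traceMk (joinGraph G k) S))
    (hq : q ∈ IAset (joinGraph G k) (traceMk (joinGraph G k) S))
    (hpq : p.1 = q.1) : p = q := by
  obtain ⟨M, hM⟩ := (mem_IAset_iff _).1 hp
  obtain ⟨N, hN⟩ := (mem_IAset_iff _).1 hq
  have h := hM.trans hN.symm
  rw [traceMk_eq_iff] at h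
  have hfil := filter_eq_of_traceCon (joinGraph G k) (fun w => w.1 = p.1)
    (fun a b ha hb hne => Or.inl ⟨ha.trans hb.symm, hne⟩) h
  simp only [FreeMonoid.toList_ofList, List.filter_append] at hfil
  rw [List.filter_cons, if_pos (by simp), List.filter_cons, if_pos (by simp [hpq])] at hfil
  simp only [List.filter_nil] at hfil
  have := congrArg List.getLast? hfil
  rw [List.getLast?_concat, List.getLast?_concat] at this
  exact Option.some.inj this

/-- the last letter of a representative -/
theorem IA_of_getLast? {G' : SimpleGraph V} {S M : List V} {p : V}
    (h : traceMk G' S = traceMk G' M) (hlast : M.getLast? = some p) :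
    p ∈ IAset G' (traceMk G' S) := by
  obtain ⟨M', hM'⟩ : ∃ M', M = M' ++ [p] := by
    have hne : M ≠ [] := by rintro rfl; simp at hlast
    refine ⟨M.dropLast, ?_⟩
    rw [List.getLast?_eq_getLast hne] at hlast
    rw [← Option.some.inj hlast]
    exact (List.dropLast_append_getLast hne).symm
  rw [h, hM']
  exact getLast_mem_IAset _ _ _

/-- counting letters in the projection -/
theorem count_map_fst {S : List (Σ j : V, Fin (k j))} (j : V) :
    (S.map Sigma.fst).count j = ∑ a : Fin (k j), S.count ⟨j, a⟩ := by
  induction S with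
  | nil => simp
  | cons w S ih =>
    rcases w with ⟨j', b⟩
    simp only [List.map_cons, List.count_cons, ih]
    rw [Finset.sum_add_distrib]
    congr 1
    rcases eq_or_ne j' j with rfl | hne
    · rw [Finset.sum_eq_single b]
      · simp
      · intro a _ ha
        simp only [beq_iff_eq, Sigma.mk.inj_iff, heq_eq_eq, true_and]
        simp [Ne.symm ha]
      · simp
    · rw [Finset.sum_eq_zero]
      · simp [hne]
      · intro a _
        rw [if_neg]
        simp only [beq_iff_eq, Sigma.mk.inj_iff, not_and]
        intro h
        exact absurd h hne

theorem count_map_fst_of_full {S : List (Σ j : V, Fin (k j))} (hS : ∀ w, S.count w = 1)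
    (j : V) : (S.map Sigma.fst).count j = k j := by
  rw [count_map_fst]; simp [hS]

end IA

section Perm
variable [DecidableEq V] {k : V → ℕ}

theorem sigma_mk_eq {q : Σ j : V, Fin (k j)} {j : V} (h : q.1 = j) (a : Fin (k j))
    (hval : (a : ℕ) = (q.2 : ℕ)) : (⟨j, a⟩ : Σ j : V, Fin (k j)) = q := by
  rcases q with ⟨j', b⟩
  subst h
  simp only [Sigma.mk.inj_iff, heq_eq_eq, true_and]
  exact Fin.ext hval

/-- every fiber-preserving permutation comes from a family of permutations of the cliques -/
theorem exists_family {σ : (Σ j : V, Fin (k j)) ≃ (Σ j : V, Fin (k j))}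
    (hσ : ∀ p, (σ p).1 = p.1) :
    ∃ f : ∀ j : V, Equiv.Perm (Fin (k j)), Equiv.sigmaCongrRight f = σ := by
  have hσ' : ∀ p, (σ.symm p).1 = p.1 := by
    intro p
    have := hσ (σ.symm p)
    rw [Equiv.apply_symm_apply] at this
    exact this.symm
  refine ⟨fun j => {
    toFun := fun a => ⟨((σ ⟨j, a⟩).2 : ℕ), by exact lt_of_lt_of_eq (σ ⟨j, a⟩).2.2 (congrArg k (hσ ⟨j, a⟩))⟩
    invFun := fun a => ⟨((σ.symm ⟨j, a⟩).2 : ℕ), by exact lt_of_lt_of_eq (σ.symm ⟨j, a⟩).2.2 (congrArg k (hσ' ⟨j, a⟩))⟩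
    left_inv := by
      intro a
      apply Fin.ext
      simp only
      rw [sigma_mk_eq (hσ ⟨j, a⟩) _ rfl, Equiv.symm_apply_apply]
    right_inv := by
      intro a
      apply Fin.ext
      simp only
      rw [sigma_mk_eq (hσ' ⟨j, a⟩) _ rfl, Equiv.apply_symm_apply] }, ?_⟩
  apply Equiv.ext
  rintro ⟨j, a⟩
  show (⟨j, _⟩ : Σ j : V, Fin (k j)) = σ ⟨j, a⟩
  exact sigma_mk_eq (hσ ⟨j, a⟩) _ rfl

theorem sigmaCongrRight_fst (f : ∀ j : V, Equiv.Perm (Fin (k j))) (p : Σ j : V, Fin (k j)) :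
    (Equiv.sigmaCongrRight f p).1 = p.1 := rfl

end Perm

section Sets
variable [Fintype V] [DecidableEq V] {G : SimpleGraph V} {k : V → ℕ} (hk : ∀ v, 0 < k v) (i : V)

theorem btilde_finite (G' : SimpleGraph V) (k' : V → ℕ) (i' : V) :
    (BtildeSet G' k' i').Finite := by
  refine Set.Finite.subset ((List.finite_length_eq V (∑ v : V, k' v)).image (traceMk G')) ?_
  rintro w ⟨L, hL, hc, _⟩
  exact ⟨L, by rw [Set.mem_setOf_eq, length_eq_sum_count]; exact Finset.sum_congr rfl fun v _ => hc v, hL⟩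

include hk in
theorem mem_B_of_full {S : List (Σ j : V, Fin (k j))} (hS : ∀ p, S.count p = 1)
    (hw : traceMk G (S.map Sigma.fst) ∈ BtildeSet G k i) :
    ∃ r : Fin (k i), IAset (joinGraph G k) (traceMk (joinGraph G k) S) = {⟨i, r⟩} ∧
      traceMk (joinGraph G k) S ∈ BtildeSet (joinGraph G k) (fun _ => 1) ⟨i, r⟩ := by
  obtain ⟨L0, hL0, hc0, hIAw⟩ := hw
  have hSne : S ≠ [] := by
    intro h
    have := hS ⟨i, ⟨0, hk i⟩⟩
    rw [h] at this
    simp at this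
  have hp : S.getLast hSne ∈ IAset (joinGraph G k) (traceMk (joinGraph G k) S) :=
    IA_of_getLast? rfl (List.getLast?_eq_getLast hSne)
  have hfst : ∀ q ∈ IAset (joinGraph G k) (traceMk (joinGraph G k) S), q.1 = i := by
    intro q hq
    have := IA_proj hq
    rw [hIAw] at this
    exact this
  set p := S.getLast hSne with hpdef
  have hpi : p.1 = i := hfst p hp
  refine ⟨⟨(p.2 : ℕ), lt_of_lt_of_eq p.2.2 (congrArg k hpi)⟩, ?_⟩
  have hpr : (⟨i, ⟨(p.2 : ℕ), lt_of_lt_of_eq p.2.2 (congrArg k hpi)⟩⟩ : Σ j : V, Fin (k j)) = p :=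
    sigma_mk_eq hpi _ rfl
  have hIA : IAset (joinGraph G k) (traceMk (joinGraph G k) S) =
      {⟨i, ⟨(p.2 : ℕ), lt_of_lt_of_eq p.2.2 (congrArg k hpi)⟩⟩} := by
    ext q
    simp only [Set.mem_singleton_iff]
    constructor
    · intro hq
      rw [hpr]
      exact IA_unique hS hq hp ((hfst q hq).trans hpi.symm)
    · rintro rfl
      rw [hpr]
      exact hp
  exact ⟨hIA, ⟨S, rfl, hS, hIA⟩⟩

include hk in
theorem proj_mem_A {S : List (Σ j : V, Fin (k j))} (hS : ∀ p, S.count p = 1)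
    {r : Fin (k i)} (hIA : IAset (joinGraph G k) (traceMk (joinGraph G k) S) = {⟨i, r⟩}) :
    traceMk G (S.map Sigma.fst) ∈ BtildeSet G k i := by
  refine ⟨S.map Sigma.fst, rfl, count_map_fst_of_full hS, ?_⟩
  ext j
  simp only [Set.mem_singleton_iff]
  constructor
  · intro hj
    obtain ⟨M, hM⟩ := (mem_IAset_iff G).1 hj
    have hcM : ∀ v, (M ++ [j]).count v = k v := by
      intro v
      rw [count_eq_of_traceMk_eq G hM v]
      exact count_map_fst_of_full hS v
    set S₂ := std k hk (M ++ [j]) with hS₂def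
    have h2c : ∀ p, S₂.count p = 1 := std_count k hk hcM
    have hfst2 : S₂.map Sigma.fst = M ++ [j] := std_map_fst k hk _
    have hcon : traceCon G (FreeMonoid.ofList (S₂.map Sigma.fst))
        (FreeMonoid.ofList (S.map Sigma.fst)) := by
      rw [hfst2]
      exact (traceMk_eq_iff G).1 hM
    obtain ⟨σ, hσf, hmk⟩ := main_lift h2c hS hcon
    have hS₂ne : S₂ ≠ [] := by
      intro h
      have := h2c ⟨i, ⟨0, hk i⟩⟩
      rw [h] at this
      simp at this
    have hq : σ (S₂.getLast hS₂ne) ∈ IAset (joinGraph G k) (traceMk (joinGraph G k) S) := by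
      refine IA_of_getLast? hmk.symm ?_
      rw [List.getLast?_map, List.getLast?_eq_getLast hS₂ne]
      rfl
    rw [hIA] at hq
    have hfst3 : (σ (S₂.getLast hS₂ne)).1 = j := by
      rw [hσf]
      have h1 : Option.map Sigma.fst S₂.getLast? = some j := by
        rw [← List.getLast?_map, hfst2, List.getLast?_concat]
      rw [List.getLast?_eq_getLast hS₂ne] at h1
      exact Option.some.inj h1
    rw [hq] at hfst3
    exact hfst3.symm
  · rintro rfl
    have : (⟨j, r⟩ : Σ j : V, Fin (k j)) ∈ IAset (joinGraph G k) (traceMk (joinGraph G k) S) := by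
      rw [hIA]
      rfl
    exact IA_proj this

end Sets

section Count
variable [Fintype V] [DecidableEq V] {G : SimpleGraph V} {k : V → ℕ} (hk : ∀ v, 0 < k v) (i : V)

theorem count_map_equiv {α β : Type*} [DecidableEq α] [DecidableEq β] (e : α ≃ β)
    (l : List α) (p : β) : (l.map ⇑e).count p = l.count (e.symm p) := by
  conv_lhs => rw [show p = e (e.symm p) by simp]
  exact List.count_map_of_injective l ⇑e e.injective _

theorem traceMk_fst_congr {S S' : List (Σ j : V, Fin (k j))}
    (h : traceMk (joinGraph G k) S = traceMk (joinGraph G k) S') :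
    traceMk G (S.map Sigma.fst) = traceMk G (S'.map Sigma.fst) := by
  rw [traceMk_eq_iff] at h ⊢
  have := traceCon_map (joinGraph G k) Sigma.fst (fun a b hab h' => hab (Or.inr h')) h
  have he : ∀ T : List (Σ j : V, Fin (k j)), FreeMonoid.map Sigma.fst (FreeMonoid.ofList T) =
      FreeMonoid.ofList (T.map Sigma.fst) := fun T => by
    apply FreeMonoid.toList.injective; simp [FreeMonoid.toList_map]
  rwa [he, he] at this

variable (G k)

/-- chosen representative list of an element of `B̃ⁱ(k,G)` -/
noncomputable def repList (w : ↥(BtildeSet G k i)) : List V := w.2.choose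

theorem repList_mk (w : ↥(BtildeSet G k i)) : traceMk G (repList G k i w) = w :=
  w.2.choose_spec.1

theorem repList_count (w : ↥(BtildeSet G k i)) (v : V) : (repList G k i w).count v = k v :=
  w.2.choose_spec.2.1 v

variable {G k}

theorem lift_full (f : ∀ j : V, Equiv.Perm (Fin (k j))) (w : ↥(BtildeSet G k i))
    (p : Σ j : V, Fin (k j)) :
    (((std k hk (repList G k i w)).map ⇑(Equiv.sigmaCongrRight f))).count p = 1 := by
  rw [count_map_equiv]
  exact std_count k hk (repList_count G k i w) _

theorem lift_proj (f : ∀ j : V, Equiv.Perm (Fin (k j))) (w : ↥(BtildeSet G k i)) :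
    (((std k hk (repList G k i w)).map ⇑(Equiv.sigmaCongrRight f))).map Sigma.fst =
      repList G k i w := by
  rw [List.map_map]
  have : (Sigma.fst ∘ ⇑(Equiv.sigmaCongrRight f) :
      (Σ j : V, Fin (k j)) → V) = Sigma.fst := by
    funext p; rfl
  rw [this]
  exact std_map_fst k hk _

theorem lift_mem_A (f : ∀ j : V, Equiv.Perm (Fin (k j))) (w : ↥(BtildeSet G k i)) :
    traceMk G ((((std k hk (repList G k i w)).map ⇑(Equiv.sigmaCongrRight f))).map Sigma.fst)
      ∈ BtildeSet G k i := by
  rw [lift_proj hk i f w, repList_mk G k i w]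
  exact w.2

/-- the orbit map -/
noncomputable def FF (x : (∀ j : V, Equiv.Perm (Fin (k j))) × ↥(BtildeSet G k i)) :
    Σ r : Fin (k i), ↥(BtildeSet (joinGraph G k) (fun _ => 1) ⟨i, r⟩) :=
  ⟨(mem_B_of_full hk i (lift_full hk i x.1 x.2) (lift_mem_A hk i x.1 x.2)).choose,
   ⟨traceMk (joinGraph G k) ((std k hk (repList G k i x.2)).map ⇑(Equiv.sigmaCongrRight x.1)),
    (mem_B_of_full hk i (lift_full hk i x.1 x.2) (lift_mem_A hk i x.1 x.2)).choose_spec.2⟩⟩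

theorem FF_val (x : (∀ j : V, Equiv.Perm (Fin (k j))) × ↥(BtildeSet G k i)) :
    ((FF hk i x).2 : TraceMonoid (joinGraph G k)) =
      traceMk (joinGraph G k)
        ((std k hk (repList G k i x.2)).map ⇑(Equiv.sigmaCongrRight x.1)) := rfl

theorem FF_IA (x : (∀ j : V, Equiv.Perm (Fin (k j))) × ↥(BtildeSet G k i)) :
    IAset (joinGraph G k) ((FF hk i x).2 : TraceMonoid (joinGraph G k)) =
      {⟨i, (FF hk i x).1⟩} :=
  (mem_B_of_full hk i (lift_full hk i x.1 x.2) (lift_mem_A hk i x.1 x.2)).choose_spec.1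

theorem sigma_subtype_ext {X : Type*} {n : ℕ} {C : Fin n → Set X}
    {s t : Σ r : Fin n, ↥(C r)} (h1 : s.1 = t.1) (h2 : (s.2 : X) = (t.2 : X)) : s = t := by
  rcases s with ⟨r, v⟩
  rcases t with ⟨r', v'⟩
  cases h1
  exact congrArg _ (Subtype.ext h2)

theorem FF_bijective : Function.Bijective (FF hk i (G := G)) := by
  constructor
  · rintro ⟨f, w⟩ ⟨g, w'⟩ he
    have hval := congrArg (fun s : (Σ r : Fin (k i),
        ↥(BtildeSet (joinGraph G k) (fun _ => 1) ⟨i, r⟩)) =>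
        (s.2 : TraceMonoid (joinGraph G k))) he
    simp only [FF_val] at hval
    -- the underlying witnesses agree
    have hww : w = w' := by
      have h1 := traceMk_fst_congr hval
      rw [lift_proj hk i f w, lift_proj hk i g w', repList_mk, repList_mk] at h1
      exact Subtype.ext h1
    subst hww
    -- freeness
    have hσg : ∀ p, ((Equiv.sigmaCongrRight g).symm p).1 = p.1 := by
      intro p
      have := sigmaCongrRight_fst g ((Equiv.sigmaCongrRight g).symm p)
      rwa [Equiv.apply_symm_apply] at this
    have hcon := traceCon_map (joinGraph G k) ⇑(Equiv.sigmaCongrRight g).symm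
      (sigma_adj_reflect hσg) ((traceMk_eq_iff _).1 hval)
    have heq : ∀ (σ τ : (Σ j : V, Fin (k j)) ≃ (Σ j : V, Fin (k j))) (T : List _),
        FreeMonoid.map ⇑τ (FreeMonoid.ofList (T.map ⇑σ)) =
        FreeMonoid.ofList (T.map (⇑τ ∘ ⇑σ)) := by
      intro σ τ T
      apply FreeMonoid.toList.injective
      simp [FreeMonoid.toList_map]
    rw [heq, heq] at hcon
    have hid : (⇑(Equiv.sigmaCongrRight g).symm ∘ ⇑(Equiv.sigmaCongrRight g) :
        (Σ j : V, Fin (k j)) → _) = id := by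
      funext p; simp
    rw [hid, List.map_id] at hcon
    have hfix := free_action (std_count k hk (repList_count G k i w))
      (σ := (Equiv.sigmaCongrRight f).trans (Equiv.sigmaCongrRight g).symm)
      (fun p => by
        have h1 := sigmaCongrRight_fst f p
        have h2 := hσg (Equiv.sigmaCongrRight f p)
        simp only [Equiv.trans_apply]
        rw [h2, h1])
      (by rw [traceMk_eq_iff]
          have : (⇑((Equiv.sigmaCongrRight f).trans (Equiv.sigmaCongrRight g).symm) :
              (Σ j : V, Fin (k j)) → _) =
              ⇑(Equiv.sigmaCongrRight g).symm ∘ ⇑(Equiv.sigmaCongrRight f) := rfl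
          rw [this]
          exact hcon)
    have hfg : f = g := by
      funext j
      apply Equiv.ext
      intro a
      have := hfix ⟨j, a⟩
      have h2 : Equiv.sigmaCongrRight f ⟨j, a⟩ = Equiv.sigmaCongrRight g ⟨j, a⟩ := by
        have := congrArg ⇑(Equiv.sigmaCongrRight g) this
        simpa using this
      have h3 : (⟨j, f j a⟩ : Σ j : V, Fin (k j)) = ⟨j, g j a⟩ := h2
      simpa using h3
    rw [hfg]
  · rintro ⟨r, t, ht⟩
    obtain ⟨S₂, hS₂mk, hS₂c, hIA2⟩ := ht
    have hIA2' : IAset (joinGraph G k) (traceMk (joinGraph G k) S₂) = {⟨i, r⟩} := by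
      rw [hS₂mk]; exact hIA2
    have hw0 : traceMk G (S₂.map Sigma.fst) ∈ BtildeSet G k i :=
      proj_mem_A hk i hS₂c hIA2'
    set w0 : ↥(BtildeSet G k i) := ⟨traceMk G (S₂.map Sigma.fst), hw0⟩ with hw0def
    have hcon : traceCon G
        (FreeMonoid.ofList ((std k hk (repList G k i w0)).map Sigma.fst))
        (FreeMonoid.ofList (S₂.map Sigma.fst)) := by
      rw [std_map_fst k hk, ← traceMk_eq_iff, repList_mk]
    obtain ⟨σ, hσf, hmk⟩ := main_lift (std_count k hk (repList_count G k i w0)) hS₂c hcon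
    obtain ⟨f, hf⟩ := exists_family hσf
    refine ⟨(f, w0), ?_⟩
    have hteq : ((FF hk i (f, w0)).2 : TraceMonoid (joinGraph G k)) = t := by
      rw [FF_val, hf, hmk, hS₂mk]
    refine sigma_subtype_ext ?_ hteq
    -- the clique indices agree
    have h1 := FF_IA hk i (f, w0)
    rw [hteq, ← hS₂mk, hIA2'] at h1
    have h2 : (⟨i, (FF hk i (f, w0)).1⟩ : Σ j : V, Fin (k j)) = ⟨i, r⟩ := by
      rw [Set.singleton_eq_singleton_iff] at h1
      exact h1.symm
    simpa using h2

include hk in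
theorem key_count :
    (∏ j : V, Nat.factorial (k j)) * Nat.card ↥(BtildeSet G k i) =
      ∑ r : Fin (k i),
        Nat.card ↥(BtildeSet (joinGraph G k) (fun _ => 1) ⟨i, r⟩) := by
  classical
  have hkey := Nat.card_eq_of_bijective (FF hk i (G := G)) (FF_bijective hk i)
  rw [Nat.card_prod, Nat.card_pi] at hkey
  simp only [Nat.card_eq_fintype_card, Fintype.card_perm, Fintype.card_fin] at hkey
  letI : ∀ r : Fin (k i), Fintype ↥(BtildeSet (joinGraph G k) (fun _ => 1) ⟨i, r⟩) :=
    fun r => Set.Finite.fintype (btilde_finite (V := Σ j : V, Fin (k j)) _ _ _)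
  rw [Nat.card_eq_fintype_card (α := Σ r : Fin (k i), _), Fintype.card_sigma] at hkey
  simp only [Nat.card_eq_fintype_card]
  exact hkey

end Count

end Stmt9

/-- `|B̃ⁱ(k,G)| = (1/k!) · Σ_{r=1}^{k i} |B̃^{iʳ}(1, G(k))|`, where `k! = ∏ⱼ (k j)!`
and `iʳ` is the `r`-th vertex of the `i`-th clique of the join graph `G(k)`. -/
theorem stmt9 {V : Type*} [Fintype V] [DecidableEq V] (G : SimpleGraph V)
    (k : V → ℕ) (hk : ∀ v, 0 < k v) (i : V) :
    (Nat.card (BtildeSet G k i) : ℚ) =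
      (1 / ∏ j : V, (Nat.factorial (k j) : ℚ)) *
        ∑ r : Fin (k i),
          (Nat.card (BtildeSet (joinGraph G k) (fun _ => 1) ⟨i, r⟩) : ℚ) := by

  classical
  have hkey := Stmt9.key_count hk i (G := G)
  have hP : (∏ j : V, ((k j).factorial : ℚ)) ≠ 0 := by
    refine Finset.prod_ne_zero_iff.2 fun j _ => ?_
    exact_mod_cast (k j).factorial_ne_zero
  have hcast : ((∏ j : V, (k j).factorial : ℕ) : ℚ) = ∏ j : V, ((k j).factorial : ℚ) := by
    push_cast; rfl
  rw [one_div, inv_mul_eq_div, eq_div_iff hP, mul_comm, ← hcast]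
  rw [show ∑ r : Fin (k i), (Nat.card (BtildeSet (joinGraph G k) (fun _ => 1) ⟨i, r⟩) : ℚ) =
      ((∑ r : Fin (k i), Nat.card (BtildeSet (joinGraph G k) (fun _ => 1) ⟨i, r⟩) : ℕ) : ℚ) by
    push_cast; rfl]
  exact_mod_cast congrArg (Nat.cast (R := ℚ)) hkey
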